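/- Let (T0, D0, T1, D1, ..., Tn, {bn,cn,a0,b0}) be a ring of bowties in a matroid M, with Ti = {ai,bi,ci}. Then M\c0,c1,...,cn/a1 is isomorphic to M\a0,b1,a2,a3,...,an/b2. -/

import Mathlib

open Set

namespace MatroidSplitter

variable {α β : Type*}

/-- A circuit of a matroid: a minimal dependent set. -/
def IsCircuit (M : Matroid α) (C : Set α) : Prop :=
  M.Dep C ∧ ∀ D, D ⊂ C → ¬ M.Dep D

/-- A cocircuit: a circuit of the dual matroid. -/
def IsCocircuit (M : Matroid α) (C : Set α) : Prop := IsCircuit M✶ C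

/-- A triangle: a 3-element circuit. -/
def IsTriangle (M : Matroid α) (T : Set α) : Prop := IsCircuit M T ∧ T.encard = 3

/-- A triad: a 3-element cocircuit. -/
def IsTriad (M : Matroid α) (T : Set α) : Prop := IsCocircuit M T ∧ T.encard = 3

/-- Deletion of a set of elements. -/
def del (M : Matroid α) (D : Set α) : Matroid α := M.restrict (M.E \ D)

/-- Contraction of a set of elements. -/
def con (M : Matroid α) (C : Set α) : Matroid α := (del M✶ C)✶

/-- The extended rank of a set: supremum of cardinalities of independent subsets. -/
noncomputable def eRk (M : Matroid α) (X : Set α) : ℕ∞ :=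
  ⨆ I : {I : Set α // M.Indep I ∧ I ⊆ X}, (I : Set α).encard

/-- The extended rank of a matroid. -/
noncomputable def eRank (M : Matroid α) : ℕ∞ := eRk M M.E

/-- `(X, E - X)` is a `k`-separation of `M`:  both sides have at least `k` elements and
`r(X) + r(E - X) ≤ r(M) + k - 1`. -/
def IsKSeparation (M : Matroid α) (k : ℕ) (X : Set α) : Prop :=
  X ⊆ M.E ∧ (k : ℕ∞) ≤ X.encard ∧ (k : ℕ∞) ≤ (M.E \ X).encard ∧
    eRk M X + eRk M (M.E \ X) ≤ eRank M + (k - 1 : ℕ)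

/-- A matroid is `3`-connected if it has no `k`-separation for `k < 3`. -/
def ThreeConnected (M : Matroid α) : Prop :=
  ∀ k : ℕ, k < 3 → ∀ X : Set α, ¬ IsKSeparation M k X

/-- A matroid is internally 4-connected if it is 3-connected and one side of every
3-separation has exactly three elements. -/
def InternallyFourConnected (M : Matroid α) : Prop :=
  ThreeConnected M ∧ ∀ X : Set α, IsKSeparation M 3 X →
    X.encard = 3 ∨ (M.E \ X).encard = 3

/-- A 4-fan `(x₁,x₂,x₃,x₄)`: four distinct elements with `{x₁,x₂,x₃}` a triangle
and `{x₂,x₃,x₄}` a triad. -/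
def IsFan4 (M : Matroid α) (x₁ x₂ x₃ x₄ : α) : Prop :=
  ({x₁, x₂, x₃, x₄} : Set α).encard = 4 ∧
    IsTriangle M {x₁, x₂, x₃} ∧ IsTriad M {x₂, x₃, x₄}

/-- A matroid is `(4,4,S)`-connected if it is 3-connected and one side of every
3-separation is a triangle, a triad, or a 4-element fan. -/
def FourFourSConnected (M : Matroid α) : Prop :=
  ThreeConnected M ∧ ∀ X : Set α, IsKSeparation M 3 X →
    ∃ Z ∈ ({X, M.E \ X} : Set (Set α)),
      IsTriangle M Z ∨ IsTriad M Z ∨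
        ∃ x₁ x₂ x₃ x₄, Z = {x₁, x₂, x₃, x₄} ∧ IsFan4 M x₁ x₂ x₃ x₄

/-- A set is fully closed if it is closed in the matroid and in its dual. -/
def FullyClosed (M : Matroid α) (X : Set α) : Prop :=
  M.closure X ⊆ X ∧ M✶.closure X ⊆ X

/-- The full closure of a set: the smallest fully closed set containing it. -/
def fcl (M : Matroid α) (X : Set α) : Set α :=
  ⋂₀ {Y | X ∩ M.E ⊆ Y ∧ FullyClosed M Y}

/-- A matroid is sequentially 4-connected if it is 3-connected and every
3-separation has a side whose full closure is the ground set. -/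
def SequentiallyFourConnected (M : Matroid α) : Prop :=
  ThreeConnected M ∧ ∀ X : Set α, IsKSeparation M 3 X →
    fcl M X = M.E ∨ fcl M (M.E \ X) = M.E

/-- A binary matroid: every circuit and cocircuit intersect in an even number
of elements. -/
def Binary (M : Matroid α) : Prop :=
  ∀ C K : Set α, IsCircuit M C → IsCocircuit M K → ∃ m : ℕ, (C ∩ K).encard = 2 * m

/-- An isomorphism between matroids via the map `f`. -/
def IsoMWith (M : Matroid α) (N : Matroid β) (f : α → β) : Prop :=
  Set.BijOn f M.E N.E ∧ ∀ I ⊆ M.E, (M.Indep I ↔ N.Indep (f '' I))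

/-- Two matroids are isomorphic. -/
def IsoM (M : Matroid α) (N : Matroid β) : Prop := ∃ f : α → β, IsoMWith M N f

/-- `M` has a minor isomorphic to `N`. -/
def HasMinorIso (M : Matroid α) (N : Matroid β) : Prop :=
  ∃ C D : Set α, IsoM (del (con M C) D) N

/-- A string of bowties `T₀, D₀, T₁, D₁, …, Tₙ` in `M`: triangles
`Tᵢ = {aᵢ, bᵢ, cᵢ}` and cocircuits `Dⱼ = {bⱼ, cⱼ, aⱼ₊₁, bⱼ₊₁}`, with all elements
distinct except that `a₀` may equal `cₙ`. -/
def BowtieString (M : Matroid α) (n : ℕ) (a b c : ℕ → α) : Prop :=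
  1 ≤ n ∧
  (∀ i ≤ n, IsTriangle M {a i, b i, c i}) ∧
  (∀ j < n, IsCocircuit M {b j, c j, a (j+1), b (j+1)}) ∧
  (∀ i ≤ n, ∀ j ≤ n,
    (i ≠ j → a i ≠ a j ∧ b i ≠ b j ∧ c i ≠ c j) ∧
    a i ≠ b j ∧ b i ≠ c j ∧ (a i ≠ c j ∨ (i = 0 ∧ j = n)))

/-- A ring of bowties: a string of bowties with `n ≥ 2` that wraps around, with all
elements distinct. -/
def BowtieRing (M : Matroid α) (n : ℕ) (a b c : ℕ → α) : Prop :=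
  2 ≤ n ∧
  (∀ i ≤ n, IsTriangle M {a i, b i, c i}) ∧
  (∀ j < n, IsCocircuit M {b j, c j, a (j+1), b (j+1)}) ∧
  IsCocircuit M {b n, c n, a 0, b 0} ∧
  (∀ i ≤ n, ∀ j ≤ n,
    (i ≠ j → a i ≠ a j ∧ b i ≠ b j ∧ c i ≠ c j) ∧
    a i ≠ b j ∧ b i ≠ c j ∧ a i ≠ c j)

end MatroidSplitter

namespace MatroidSplitter

/-- A quasi rotor with central triangle `{x₄,x₅,x₆}` and central element `x₅`. -/
def QuasiRotor {α : Type*} (M : Matroid α) (x₁ x₂ x₃ x₄ x₅ x₆ x₇ x₈ x₉ : α) : Prop :=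
  ({x₁, x₂, x₃, x₄, x₅, x₆, x₇, x₈, x₉} : Set α).encard = 9 ∧
  IsTriangle M {x₁, x₂, x₃} ∧ IsTriangle M {x₄, x₅, x₆} ∧ IsTriangle M {x₇, x₈, x₉} ∧
  IsCocircuit M {x₂, x₃, x₄, x₅} ∧ IsCocircuit M {x₅, x₆, x₇, x₈} ∧
  IsTriangle M {x₃, x₅, x₇}

end MatroidSplitter

namespace MatroidSplitter

variable {α β γ : Type*}
variable {M : Matroid α}

lemma IsCircuit.subset_ground {C : Set α} (hC : IsCircuit M C) : C ⊆ M.E :=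
  hC.1.subset_ground

lemma IsCircuit.ssubset_indep {C S : Set α} (hC : IsCircuit M C) (hS : S ⊂ C) : M.Indep S :=
  Matroid.indep_of_not_dep (hC.2 S hS) (hS.subset.trans hC.subset_ground)

lemma del_ground' (M : Matroid α) (D : Set α) : (del M D).E = M.E \ D := rfl

lemma del_indep_iff {D I : Set α} : (del M D).Indep I ↔ M.Indep I ∧ I ⊆ M.E \ D :=
  Matroid.restrict_indep_iff

lemma con_ground' (M : Matroid α) (C : Set α) : (con M C).E = M.E \ C := by
  simp [con, del]

lemma con_single_indep {z : α} (hz : z ∈ M.E) (hnl : M.Indep {z}) (I : Set α) :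
    (con M {z}).Indep I ↔ z ∉ I ∧ M.Indep (insert z I) := by
  have hRE : M✶.E \ {z} ⊆ M✶.E := diff_subset
  have hsp : M✶.Spanning (M✶.E \ {z}) := by
    rw [← Matroid.coindep_iff_compl_spanning]
    rwa [Matroid.Coindep, Matroid.dual_dual]
  constructor
  · intro hI
    rw [con, del, Matroid.dual_indep_iff_exists'] at hI
    obtain ⟨hIR, B, hB, hdisj⟩ := hI
    rw [Matroid.isBase_restrict_iff] at hB
    have hBbase : M✶.IsBase B := by
      rw [Matroid.isBase_iff_indep_closure_eq]
      refine ⟨hB.indep, ?_⟩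
      rw [hB.closure_eq_closure]
      exact hsp.closure_eq
    have hzI : z ∉ I := fun hzI => (hIR hzI).2 rfl
    refine ⟨hzI, ?_⟩
    rw [← Matroid.dual_dual M, Matroid.dual_indep_iff_exists']
    refine ⟨insert_subset hz (fun x hx => (hIR hx).1), B, hBbase, ?_⟩
    rw [Set.disjoint_left]
    rintro x (rfl | hxI)
    · exact fun hzB => (hB.subset hzB).2 rfl
    · exact fun hxB => hdisj.le_bot ⟨hxI, hxB⟩ |>.elim
  · rintro ⟨hzI, hind⟩
    rw [← Matroid.dual_dual M, Matroid.dual_indep_iff_exists'] at hind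
    obtain ⟨hsub, B, hB, hdisj⟩ := hind
    have hdisj' : z ∉ B ∧ Disjoint I B :=
      ⟨fun hzB => hdisj.le_bot ⟨Set.mem_insert _ _, hzB⟩ |>.elim,
        Set.disjoint_left.2 fun x hxI hxB =>
          hdisj.le_bot ⟨Set.mem_insert_of_mem _ hxI, hxB⟩ |>.elim⟩
    rw [con, del, Matroid.dual_indep_iff_exists']
    have hBR : B ⊆ M✶.E \ {z} := fun x hx =>
      ⟨hB.subset_ground hx, fun hxz => hdisj'.1 (Set.mem_singleton_iff.1 hxz ▸ hx)⟩
    refine ⟨fun x hx => ⟨hsub (Set.mem_insert_of_mem _ hx), fun hxz => hzI (Set.mem_singleton_iff.1 hxz ▸ hx)⟩,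
      B, ?_, hdisj'.2⟩
    rw [Matroid.isBase_restrict_iff]
    rw [Matroid.isBasis_iff_indep_closure]
    exact ⟨hB.indep, by rw [hB.closure_eq]; exact hRE, hBR⟩

lemma con_del_indep {D : Set α} {z : α} (hz : z ∈ M.E) (hzD : z ∉ D) (hnl : M.Indep {z})
    (I : Set α) :
    (con (del M D) {z}).Indep I ↔ z ∉ I ∧ I ⊆ M.E \ D ∧ M.Indep (insert z I) := by
  have hz' : z ∈ (del M D).E := ⟨hz, hzD⟩
  have hnl' : (del M D).Indep {z} := del_indep_iff.2 ⟨hnl, Set.singleton_subset_iff.2 hz'⟩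
  rw [con_single_indep hz' hnl', del_indep_iff]
  constructor
  · rintro ⟨h1, h2, h3⟩
    exact ⟨h1, fun x hx => h3 (Set.mem_insert_of_mem _ hx), h2⟩
  · rintro ⟨h1, h2, h3⟩
    exact ⟨h1, h3, insert_subset hz' h2⟩


variable {α β γ : Type*} [DecidableEq α] {M : Matroid α}

lemma circuit_clone {z u v : α} (hC : IsCircuit M {z, u, v})
    (hzu : z ≠ u) (hzv : z ≠ v) (huv : u ≠ v)
    {J : Set α} (hzJ : z ∈ J) (huJ : u ∉ J) (hvJ : v ∉ J)
    (h : M.Indep (insert v J)) : M.Indep (insert u J) := by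
  have hJ : M.Indep J := h.subset (Set.subset_insert _ _)
  have hJE : J ⊆ M.E := hJ.subset_ground
  have huE : u ∈ M.E := hC.subset_ground (by simp)
  have hvcl : v ∉ M.closure J := ((hJ.insert_indep_iff_of_notMem hvJ).1 h).2
  have hzu_indep : M.Indep {z, u} := hC.ssubset_indep
    ⟨by intro x hx; simp only [Set.mem_insert_iff, Set.mem_singleton_iff] at hx ⊢; tauto,
     fun hsup => by
      have := hsup (show v ∈ ({z, u, v} : Set α) by simp)
      simp only [Set.mem_insert_iff, Set.mem_singleton_iff] at this
      rcases this with h' | h'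
      · exact hzv h'.symm
      · exact huv h'.symm⟩
  have hvzu : v ∈ M.closure {z, u} := by
    have hdep : ¬ M.Indep (insert v {z, u}) := by
      have he : insert v ({z, u} : Set α) = {z, u, v} := by
        ext x
        simp only [Set.mem_insert_iff, Set.mem_singleton_iff]
        tauto
      rw [he]
      exact hC.1.not_indep
    rw [hzu_indep.insert_indep_iff_of_notMem (by simp [Ne.symm hzv, Ne.symm huv])] at hdep
    have hvE : v ∈ M.E := hC.subset_ground (by simp)
    by_contra hcon
    exact hdep ⟨hvE, hcon⟩
  rw [hJ.insert_indep_iff_of_notMem huJ]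
  refine ⟨huE, fun hucl => ?_⟩
  have hsub : ({z, u} : Set α) ⊆ M.closure J := by
    rintro x (rfl | hx)
    · exact M.subset_closure J hJE hzJ
    · simp only [Set.mem_singleton_iff] at hx
      subst hx; exact hucl
  exact hvcl (M.closure_subset_closure_of_subset_closure hsub hvzu)

lemma cocircuit_flat {K : Set α} (hK : IsCocircuit M K) :
    K ⊆ M.E ∧ M.closure (M.E \ K) = M.E \ K := by
  have hKE : K ⊆ M.E := by simpa using hK.subset_ground
  refine ⟨hKE, ?_⟩
  have hns : ¬ M.Spanning (M.E \ K) := fun hsp =>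
    hK.1.not_indep ((Matroid.coindep_iff_compl_spanning hKE).2 hsp)
  have hsub : M.closure (M.E \ K) ⊆ M.E \ K := by
    intro x hx
    have hxE : x ∈ M.E := M.closure_subset_ground _ hx
    by_contra hxH
    have hxK : x ∈ K := by
      by_contra hxK
      exact hxH ⟨hxE, hxK⟩
    have hind : M✶.Indep (K \ {x}) :=
      Matroid.indep_of_not_dep (hK.2 _ (Set.sdiff_singleton_ssubset.2 hxK))
        ((Set.diff_subset).trans (by simpa using hKE))
    have hcl : M.closure (M.E \ (K \ {x})) = M.E := Matroid.Coindep.closure_compl hind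
    have hEq : M.E \ (K \ {x}) = insert x (M.E \ K) := by
      ext y
      simp only [Set.mem_diff, Set.mem_insert_iff, Set.mem_singleton_iff]
      constructor
      · rintro ⟨hyE, hy⟩
        by_cases hyx : y = x
        · exact Or.inl hyx
        · exact Or.inr ⟨hyE, fun hyK => hy ⟨hyK, hyx⟩⟩
      · rintro (rfl | ⟨hyE, hyK⟩)
        · exact ⟨hxE, fun hy => hy.2 rfl⟩
        · exact ⟨hyE, fun hy => hyK hy.1⟩
    rw [hEq, Matroid.closure_insert_eq_of_mem_closure hx] at hcl
    exact hns ((Matroid.spanning_iff_closure_eq diff_subset).2 hcl)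
  exact hsub.antisymm (M.subset_closure _ diff_subset)

lemma swap_image_of_not_mem {u v : α} {I : Set α} (hu : u ∉ I) (hv : v ∉ I) :
    (Equiv.swap u v) '' I = I := by
  rw [Set.image_congr (g := id), Set.image_id]
  intro x hx
  exact Equiv.swap_apply_of_ne_of_ne (fun h => hu (h ▸ hx)) (fun h => hv (h ▸ hx))

lemma swap_image_of_mem {u v : α} {I : Set α} (huv : u ≠ v) (hu : u ∉ I) (hv : v ∈ I) :
    (Equiv.swap u v) '' I = insert u (I \ {v}) := by
  ext x
  simp only [Set.mem_image, Set.mem_insert_iff, Set.mem_diff, Set.mem_singleton_iff]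
  constructor
  · rintro ⟨y, hy, rfl⟩
    rcases eq_or_ne y v with h | hyv
    · exact Or.inl (by rw [h, Equiv.swap_apply_right])
    rcases eq_or_ne y u with h | hyu
    · exact absurd (h ▸ hy) hu
    · rw [Equiv.swap_apply_of_ne_of_ne hyu hyv]
      exact Or.inr ⟨hy, hyv⟩
  · rintro (h | ⟨hx, hxv⟩)
    · exact ⟨v, hv, by rw [Equiv.swap_apply_right, h]⟩
    · exact ⟨x, hx, Equiv.swap_apply_of_ne_of_ne (fun h => hu (h ▸ hx)) hxv⟩

lemma bijOn_swap {u v : α} {S T : Set α} (huv : u ≠ v) (hu : u ∉ S) (hv : v ∈ S)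
    (hT : T = insert u (S \ {v})) : Set.BijOn (Equiv.swap u v) S T := by
  have h2 := ((Equiv.swap u v).injective.injOn (s := S)).bijOn_image
  rwa [swap_image_of_mem huv hu hv, ← hT] at h2

lemma isoM_refl (M : Matroid α) : IsoM M M :=
  ⟨id, Set.bijOn_id _, fun I _ => by rw [Set.image_id]⟩

lemma IsoM.trans {M : Matroid α} {N : Matroid β} {P : Matroid γ}
    (h1 : IsoM M N) (h2 : IsoM N P) : IsoM M P := by
  obtain ⟨f, hf, hfI⟩ := h1
  obtain ⟨g, hg, hgI⟩ := h2
  refine ⟨g ∘ f, hg.comp hf, fun I hI => ?_⟩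
  rw [hfI I hI, hgI (f '' I) ((Set.image_mono hI).trans hf.mapsTo.image_subset),
    Set.image_comp]


lemma stepA {D₁ D₂ : Set α} {z u v : α} (hC : IsCircuit M {z, u, v})
    (hzu : z ≠ u) (hzv : z ≠ v) (huv : u ≠ v)
    (hu1 : u ∈ D₁) (hv1 : v ∉ D₁) (hz1 : z ∉ D₁)
    (hD : D₂ = insert v (D₁ \ {u})) :
    IsoM (con (del M D₁) {z}) (con (del M D₂) {z}) := by
  have hzE : z ∈ M.E := hC.subset_ground (by simp)
  have huE : u ∈ M.E := hC.subset_ground (by simp)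
  have hvE : v ∈ M.E := hC.subset_ground (by simp)
  have hnl : M.Indep {z} := by
    refine hC.ssubset_indep ⟨?_, fun hsup => ?_⟩
    · intro x hx
      simp only [Set.mem_singleton_iff] at hx
      simp [hx]
    · have hu' := hsup (show u ∈ ({z, u, v} : Set α) by simp)
      rw [Set.mem_singleton_iff] at hu'
      exact hzu hu'.symm
  have hz2 : z ∉ D₂ := by
    rw [hD]
    intro hmem
    rcases Set.mem_insert_iff.1 hmem with h | h
    · exact hzv h
    · exact hz1 h.1
  have hu2 : u ∉ D₂ := by
    rw [hD]
    intro hmem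
    rcases Set.mem_insert_iff.1 hmem with h | h
    · exact huv h
    · exact h.2 rfl
  have hG1 : (con (del M D₁) {z}).E = (M.E \ D₁) \ {z} := by
    rw [con_ground', del_ground']
  have hG2 : (con (del M D₂) {z}).E = (M.E \ D₂) \ {z} := by
    rw [con_ground', del_ground']
  have hvG : v ∈ (M.E \ D₁) \ {z} := ⟨⟨hvE, hv1⟩, fun h => hzv (Set.mem_singleton_iff.1 h).symm⟩
  have huG : u ∉ (M.E \ D₁) \ {z} := fun h => h.1.2 hu1
  have hground : (M.E \ D₂) \ {z} = insert u (((M.E \ D₁) \ {z}) \ {v}) := by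
    rw [hD]; ext x
    simp only [Set.mem_diff, Set.mem_insert_iff, Set.mem_singleton_iff]
    constructor
    · rintro ⟨⟨hxE, hxD⟩, hxz⟩
      rcases eq_or_ne x u with h | hxu
      · exact Or.inl h
      · refine Or.inr ⟨⟨⟨hxE, fun hxD1 => hxD (Or.inr ⟨hxD1, hxu⟩)⟩, hxz⟩,
          fun hxv => hxD (Or.inl hxv)⟩
    · rintro (h | ⟨⟨⟨hxE, hxD1⟩, hxz⟩, hxv⟩)
      · subst h
        refine ⟨⟨huE, fun hmem => ?_⟩, fun h => hzu (Set.mem_singleton_iff.1 h).symm⟩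
        rcases hmem with h' | h'
        · exact huv h'
        · exact h'.2 rfl
      · refine ⟨⟨hxE, fun hmem => ?_⟩, hxz⟩
        rcases hmem with h' | h'
        · exact hxv h'
        · exact hxD1 h'.1
  refine ⟨Equiv.swap u v, ?_, ?_⟩
  · rw [hG1, hG2, hground]
    exact bijOn_swap huv huG hvG rfl
  · intro I hI
    rw [hG1] at hI
    have hIz : z ∉ I := fun h => (hI h).2 rfl
    have hIE : I ⊆ M.E := fun x hx => (hI hx).1.1
    have hID : ∀ x ∈ I, x ∉ D₁ := fun x hx => (hI hx).1.2
    have hIu : u ∉ I := fun h => hID u h hu1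
    rw [con_del_indep hzE hz1 hnl, con_del_indep hzE hz2 hnl]
    have hsub1 : I ⊆ M.E \ D₁ := fun x hx => ⟨hIE hx, hID x hx⟩
    by_cases hvI : v ∈ I
    · rw [swap_image_of_mem huv hIu hvI]
      have hznew : z ∉ insert u (I \ {v}) := by
        rintro (h | h)
        · exact hzu h
        · exact hIz h.1
      have hsub2 : insert u (I \ {v}) ⊆ M.E \ D₂ := by
        rintro x (h | ⟨hx, hxv⟩)
        · subst h; exact ⟨huE, hu2⟩
        · refine ⟨hIE hx, ?_⟩
          rw [hD]
          rintro (h' | h')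
          · exact hxv h'
          · exact hID x hx h'.1
      rw [and_iff_right hIz, and_iff_right hsub1, and_iff_right hznew, and_iff_right hsub2]
      have eq1 : insert z I = insert v (insert z (I \ {v})) := by
        ext x
        simp only [Set.mem_insert_iff, Set.mem_diff, Set.mem_singleton_iff]
        constructor
        · rintro (h | h)
          · exact Or.inr (Or.inl h)
          · rcases eq_or_ne x v with h' | h'
            · exact Or.inl h'
            · exact Or.inr (Or.inr ⟨h, h'⟩)
        · rintro (h | h | h)
          · exact Or.inr (h ▸ hvI)
          · exact Or.inl h
          · exact Or.inr h.1
      have eq2 : insert z (insert u (I \ {v})) = insert u (insert z (I \ {v})) :=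
        Set.insert_comm _ _ _
      have huJ : u ∉ insert z (I \ {v}) := by
        rintro (h | h)
        · exact hzu h.symm
        · exact hIu h.1
      have hvJ : v ∉ insert z (I \ {v}) := by
        rintro (h | h)
        · exact hzv h.symm
        · exact h.2 rfl
      have hzJ : z ∈ insert z (I \ {v}) := Set.mem_insert _ _
      constructor
      · intro h3
        rw [eq2]
        rw [eq1] at h3
        exact circuit_clone hC hzu hzv huv hzJ huJ hvJ h3
      · intro h3
        rw [eq2] at h3
        rw [eq1]
        have hC' : IsCircuit M {z, v, u} := by
          have : ({z, v, u} : Set α) = {z, u, v} := by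
            ext x; simp only [Set.mem_insert_iff, Set.mem_singleton_iff]; tauto
          rw [this]; exact hC
        exact circuit_clone hC' hzv hzu huv.symm hzJ hvJ huJ h3
    · rw [swap_image_of_not_mem hIu hvI]
      have hsub2 : I ⊆ M.E \ D₂ := by
        intro x hx
        refine ⟨hIE hx, ?_⟩
        rw [hD]
        rintro (h' | h')
        · exact hvI (h' ▸ hx)
        · exact hID x hx h'.1
      rw [and_iff_right hIz, and_iff_right hsub1, and_iff_right hIz, and_iff_right hsub2]

lemma stepB {D K : Set α} {z w : α} (hK : IsCocircuit M K) (hz : z ∈ K) (hw : w ∈ K)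
    (hzw : z ≠ w) (hKD : K \ {z, w} ⊆ D) (hzD : z ∉ D) (hwD : w ∉ D)
    (hznl : M.Indep {z}) (hwnl : M.Indep {w}) :
    IsoM (con (del M D) {z}) (con (del M D) {w}) := by
  obtain ⟨hKE, hflat⟩ := cocircuit_flat hK
  have hzE : z ∈ M.E := hKE hz
  have hwE : w ∈ M.E := hKE hw
  have hG1 : (con (del M D) {z}).E = (M.E \ D) \ {z} := by rw [con_ground', del_ground']
  have hG2 : (con (del M D) {w}).E = (M.E \ D) \ {w} := by rw [con_ground', del_ground']
  have hwG : w ∈ (M.E \ D) \ {z} := ⟨⟨hwE, hwD⟩, fun h => hzw (Set.mem_singleton_iff.1 h).symm⟩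
  have hzG : z ∉ (M.E \ D) \ {z} := fun h => h.2 rfl
  have hground : (M.E \ D) \ {w} = insert z (((M.E \ D) \ {z}) \ {w}) := by
    ext x
    simp only [Set.mem_diff, Set.mem_insert_iff, Set.mem_singleton_iff]
    constructor
    · rintro ⟨hxED, hxw⟩
      rcases eq_or_ne x z with h | hxz
      · exact Or.inl h
      · exact Or.inr ⟨⟨hxED, hxz⟩, hxw⟩
    · rintro (h | ⟨⟨hxED, hxz⟩, hxw⟩)
      · subst h; exact ⟨⟨hzE, hzD⟩, hzw⟩
      · exact ⟨hxED, hxw⟩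
  have hins : ∀ x ∈ K, ∀ I : Set α, M.Indep I → (∀ y ∈ I, y ∉ K) → x ∉ I →
      M.Indep (insert x I) := by
    intro x hxK I hIind hIK hxI
    rw [hIind.insert_indep_iff_of_notMem hxI]
    refine ⟨hKE hxK, fun hxcl => ?_⟩
    have hsub : M.closure I ⊆ M.E \ K := by
      rw [← hflat]
      exact M.closure_subset_closure (fun y hy => ⟨hIind.subset_ground hy, hIK y hy⟩)
    exact (hsub hxcl).2 hxK
  refine ⟨Equiv.swap z w, ?_, ?_⟩
  · rw [hG1, hG2, hground]
    exact bijOn_swap hzw hzG hwG rfl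
  · intro I hI
    rw [hG1] at hI
    have hIz : z ∉ I := fun h => (hI h).2 rfl
    have hIE : I ⊆ M.E := fun x hx => (hI hx).1.1
    have hID : ∀ x ∈ I, x ∉ D := fun x hx => (hI hx).1.2
    have hsub1 : I ⊆ M.E \ D := fun x hx => ⟨hIE hx, hID x hx⟩
    rw [con_del_indep hzE hzD hznl, con_del_indep hwE hwD hwnl]
    by_cases hwI : w ∈ I
    · rw [swap_image_of_mem hzw hIz hwI]
      have hwnew : w ∉ insert z (I \ {w}) := by
        rintro (h | h)
        · exact hzw h.symm
        · exact h.2 rfl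
      have hsub2 : insert z (I \ {w}) ⊆ M.E \ D := by
        rintro x (h | ⟨hx, -⟩)
        · subst h; exact ⟨hzE, hzD⟩
        · exact ⟨hIE hx, hID x hx⟩
      rw [and_iff_right hIz, and_iff_right hsub1, and_iff_right hwnew, and_iff_right hsub2]
      have eq1 : insert w (insert z (I \ {w})) = insert z I := by
        ext x
        simp only [Set.mem_insert_iff, Set.mem_diff, Set.mem_singleton_iff]
        constructor
        · rintro (h | h | h)
          · exact Or.inr (h ▸ hwI)
          · exact Or.inl h
          · exact Or.inr h.1
        · rintro (h | h)
          · exact Or.inr (Or.inl h)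
          · rcases eq_or_ne x w with h' | h'
            · exact Or.inl h'
            · exact Or.inr (Or.inr ⟨h, h'⟩)
      rw [eq1]
    · rw [swap_image_of_not_mem hIz hwI]
      rw [and_iff_right hIz, and_iff_right hsub1, and_iff_right hwI, and_iff_right hsub1]
      have hIK : ∀ y ∈ I, y ∉ K := by
        intro y hy hyK
        have : y ∈ K \ {z, w} := ⟨hyK, by
          rintro (h | h)
          · exact hIz (h ▸ hy)
          · exact hwI (h ▸ hy)⟩
        exact hID y hy (hKD this)
      constructor
      · intro h3
        exact hins w hw I (h3.subset (Set.subset_insert _ _)) hIK hwI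
      · intro h3
        exact hins z hz I (h3.subset (Set.subset_insert _ _)) hIK hIz


lemma triangle_singleton_indep {x y : α} {T : Set α} (hC : IsCircuit M T)
    (hx : x ∈ T) (hy : y ∈ T) (hxy : x ≠ y) : M.Indep {x} := by
  refine hC.ssubset_indep ⟨Set.singleton_subset_iff.2 hx, fun hsup => ?_⟩
  have := hsup hy
  rw [Set.mem_singleton_iff] at this
  exact hxy this.symm


end MatroidSplitter

open MatroidSplitter in
/-- in a ring of bowties, `M \ c₀,…,cₙ / a₁ ≅ M \ a₀,b₁,a₂,…,aₙ / b₂`. -/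
theorem statement_9 {α : Type*} (M : Matroid α)
    (n : ℕ) (a b c : ℕ → α) (h : BowtieRing M n a b c) :
    IsoM (con (del M (c '' Set.Iic n)) {a 1})
         (con (del M ({a 0, b 1} ∪ a '' Set.Icc 2 n)) {b 2}) := by
  classical
  obtain ⟨hn, hT, hDc, hW, hd⟩ := h
  have h0n : 0 ≤ n := Nat.zero_le n
  have h1n : 1 ≤ n := by omega
  have h2n : 2 ≤ n := hn
  have hTc : ∀ i ≤ n, IsCircuit M {a i, b i, c i} := fun i hi => (hT i hi).1
  have dab : ∀ i, i ≤ n → ∀ j, j ≤ n → a i ≠ b j := fun i hi j hj => (hd i hi j hj).2.1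
  have dbc : ∀ i, i ≤ n → ∀ j, j ≤ n → b i ≠ c j := fun i hi j hj => (hd i hi j hj).2.2.1
  have dac : ∀ i, i ≤ n → ∀ j, j ≤ n → a i ≠ c j := fun i hi j hj => (hd i hi j hj).2.2.2
  have daa : ∀ i, i ≤ n → ∀ j, j ≤ n → i ≠ j → a i ≠ a j :=
    fun i hi j hj hij => ((hd i hi j hj).1 hij).1
  have dbb : ∀ i, i ≤ n → ∀ j, j ≤ n → i ≠ j → b i ≠ b j :=
    fun i hi j hj hij => ((hd i hi j hj).1 hij).2.1
  have dcc : ∀ i, i ≤ n → ∀ j, j ≤ n → i ≠ j → c i ≠ c j :=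
    fun i hi j hj hij => ((hd i hi j hj).1 hij).2.2
  have hCz : ∀ i ≤ n, IsCircuit M {b i, c i, a i} := by
    intro i hi
    have he : ({b i, c i, a i} : Set α) = {a i, b i, c i} := by
      ext t; simp only [Set.mem_insert_iff, Set.mem_singleton_iff]; tauto
    rw [he]; exact hTc i hi
  have nlb : ∀ i, i ≤ n → M.Indep {b i} := fun i hi =>
    triangle_singleton_indep (hTc i hi) (by simp) (by simp) ((dab i hi i hi).symm)
  -- the deletion sets along the chain
  set S0 : Set α := c '' Set.Iic n with hS0def
  set S1 : Set α := insert (b 1) (S0 \ {c 1}) with hS1def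
  set S2 : Set α := insert (a 0) (S1 \ {c 0}) with hS2def
  set S3 : Set α := insert (a n) (S2 \ {c n}) with hS3def
  have hbS0 : ∀ i, i ≤ n → b i ∉ S0 := by
    rintro i hi ⟨j, hj, hEq⟩
    exact dbc i hi j (Set.mem_Iic.1 hj) hEq.symm
  have haS0 : ∀ i, i ≤ n → a i ∉ S0 := by
    rintro i hi ⟨j, hj, hEq⟩
    exact dac i hi j (Set.mem_Iic.1 hj) hEq.symm
  have hcS0 : ∀ j, j ≤ n → c j ∈ S0 := fun j hj => ⟨j, Set.mem_Iic.2 hj, rfl⟩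
  have haS1 : ∀ i, i ≤ n → a i ∉ S1 := by
    rintro i hi (hEq | ⟨hmem, -⟩)
    · exact dab i hi 1 h1n hEq
    · exact haS0 i hi hmem
  have hbS1 : ∀ i, i ≤ n → i ≠ 1 → b i ∉ S1 := by
    rintro i hi hi1 (hEq | ⟨hmem, -⟩)
    · exact dbb i hi 1 h1n hi1 hEq
    · exact hbS0 i hi hmem
  have hcS1 : ∀ j, j ≤ n → j ≠ 1 → c j ∈ S1 := fun j hj hj1 =>
    Set.mem_insert_of_mem _ ⟨hcS0 j hj, fun hEq => dcc j hj 1 h1n hj1 (Set.mem_singleton_iff.1 hEq)⟩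
  have haS2 : ∀ i, i ≤ n → i ≠ 0 → a i ∉ S2 := by
    rintro i hi hi0 (hEq | ⟨hmem, -⟩)
    · exact daa i hi 0 h0n hi0 hEq
    · exact haS1 i hi hmem
  have hbS2 : ∀ i, i ≤ n → i ≠ 1 → b i ∉ S2 := by
    rintro i hi hi1 (hEq | ⟨hmem, -⟩)
    · exact (dab 0 h0n i hi).symm hEq
    · exact hbS1 i hi hi1 hmem
  have hcS2 : ∀ j, j ≤ n → j ≠ 1 → j ≠ 0 → c j ∈ S2 := fun j hj hj1 hj0 =>
    Set.mem_insert_of_mem _ ⟨hcS1 j hj hj1,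
      fun hEq => dcc j hj 0 h0n hj0 (Set.mem_singleton_iff.1 hEq)⟩
  -- step 1 : swap deleted c 1 for b 1 (parallel in M / a 1, triangle T1)
  have hC1 : IsCircuit M {a 1, c 1, b 1} := by
    have he : ({a 1, c 1, b 1} : Set α) = {a 1, b 1, c 1} := by
      ext t; simp only [Set.mem_insert_iff, Set.mem_singleton_iff]; tauto
    rw [he]; exact hTc 1 h1n
  have i1 : IsoM (con (del M S0) {a 1}) (con (del M S1) {a 1}) :=
    stepA hC1 (dac 1 h1n 1 h1n) (dab 1 h1n 1 h1n) ((dbc 1 h1n 1 h1n).symm)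
      (hcS0 1 h1n) (hbS0 1 h1n) (haS0 1 h1n) rfl
  -- step 2 : swap contracted a 1 for b 0 (series, cocircuit D0)
  have i2 : IsoM (con (del M S1) {a 1}) (con (del M S1) {b 0}) := by
    refine stepB (hDc 0 (by omega)) (by simp) (by simp) (dab 1 h1n 0 h0n) ?_
      (haS1 1 h1n) (hbS1 0 h0n (by omega))
      (triangle_singleton_indep (hTc 1 h1n) (by simp) (by simp) (dab 1 h1n 1 h1n))
      (nlb 0 h0n)
    rintro x ⟨hxK, hx2⟩
    simp only [Set.mem_insert_iff, Set.mem_singleton_iff] at hxK hx2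
    push_neg at hx2
    rcases hxK with rfl | rfl | rfl | rfl
    · exact absurd rfl hx2.2
    · exact hcS1 0 h0n (by omega)
    · exact absurd rfl hx2.1
    · exact Set.mem_insert _ _
  -- step 3 : swap deleted c 0 for a 0 (parallel in M / b 0, triangle T0)
  have hC0 : IsCircuit M {b 0, c 0, a 0} := hCz 0 h0n
  have i3 : IsoM (con (del M S1) {b 0}) (con (del M S2) {b 0}) :=
    stepA hC0 (dbc 0 h0n 0 h0n) ((dab 0 h0n 0 h0n).symm) ((dac 0 h0n 0 h0n).symm)
      (hcS1 0 h0n (by omega)) (haS1 0 h0n) (hbS1 0 h0n (by omega)) rfl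
  -- step 4 : swap contracted b 0 for b n (series, wrap cocircuit)
  have i4 : IsoM (con (del M S2) {b 0}) (con (del M S2) {b n}) := by
    refine stepB hW (by simp) (by simp) (dbb 0 h0n n (le_refl n) (by omega)) ?_
      (hbS2 0 h0n (by omega)) (hbS2 n (le_refl n) (by omega)) (nlb 0 h0n) (nlb n (le_refl n))
    rintro x ⟨hxK, hx2⟩
    simp only [Set.mem_insert_iff, Set.mem_singleton_iff] at hxK hx2
    push_neg at hx2
    rcases hxK with rfl | rfl | rfl | rfl
    · exact absurd rfl hx2.2
    · exact hcS2 n (le_refl n) (by omega) (by omega)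
    · exact Set.mem_insert _ _
    · exact absurd rfl hx2.1
  -- step 5 : swap deleted c n for a n (parallel in M / b n, triangle Tn)
  have hCn : IsCircuit M {b n, c n, a n} := hCz n (le_refl n)
  have i5 : IsoM (con (del M S2) {b n}) (con (del M S3) {b n}) :=
    stepA hCn (dbc n (le_refl n) n (le_refl n)) ((dab n (le_refl n) n (le_refl n)).symm)
      ((dac n (le_refl n) n (le_refl n)).symm)
      (hcS2 n (le_refl n) (by omega) (by omega)) (haS2 n (le_refl n) (by omega))
      (hbS2 n (le_refl n) (by omega)) rfl
  -- the inductive part, moving from (E_n, b n) down to (E_2, b 2)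
  have key : ∀ k, 2 ≤ k → k ≤ n →
      IsoM (con (del M (({a 0, b 1} : Set α) ∪ c '' Set.Icc 2 (k-1) ∪ a '' Set.Icc k n)) {b k})
           (con (del M (({a 0, b 1} : Set α) ∪ a '' Set.Icc 2 n)) {b 2}) := by
    intro k hk2
    induction k, hk2 using Nat.le_induction with
    | base =>
      intro _
      have e1 : ((2:ℕ) - 1) = 1 := rfl
      have e2 : Set.Icc 2 ((2:ℕ) - 1) = (∅ : Set ℕ) := by
        rw [e1]; exact Set.Icc_eq_empty (by omega)
      rw [e2, Set.image_empty, Set.union_empty]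
      exact isoM_refl _
    | succ k hk IH =>
      intro hkn
      have hkn' : k ≤ n := by omega
      have hklt : k < n := by omega
      have hred : (k + 1) - 1 = k := by omega
      rw [hred]
      have hbE : ∀ i, i ≤ n → i ≠ 1 →
          b i ∉ ({a 0, b 1} : Set α) ∪ c '' Set.Icc 2 k ∪ a '' Set.Icc (k+1) n := by
        rintro i hi hi1 (((hEq | hEq) | ⟨j, hj, hEq⟩) | ⟨j, hj, hEq⟩)
        · exact (dab 0 h0n i hi).symm hEq
        · exact dbb i hi 1 h1n hi1 (Set.mem_singleton_iff.1 hEq)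
        · exact dbc i hi j (by have := (Set.mem_Icc.1 hj).2; omega) hEq.symm
        · exact dab j (Set.mem_Icc.1 hj).2 i hi hEq
      have haE : a k ∉ ({a 0, b 1} : Set α) ∪ c '' Set.Icc 2 k ∪ a '' Set.Icc (k+1) n := by
        rintro (((hEq | hEq) | ⟨j, hj, hEq⟩) | ⟨j, hj, hEq⟩)
        · exact daa k hkn' 0 h0n (by omega) hEq
        · exact dab k hkn' 1 h1n (Set.mem_singleton_iff.1 hEq)
        · exact dac k hkn' j (by have := (Set.mem_Icc.1 hj).2; omega) hEq.symm
        · exact daa j (Set.mem_Icc.1 hj).2 k hkn' (by have := (Set.mem_Icc.1 hj).1; omega) hEq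
      have hcE : c k ∈ ({a 0, b 1} : Set α) ∪ c '' Set.Icc 2 k ∪ a '' Set.Icc (k+1) n :=
        Or.inl (Or.inr ⟨k, Set.mem_Icc.2 ⟨hk, le_refl k⟩, rfl⟩)
      have haE1 : a (k+1) ∈ ({a 0, b 1} : Set α) ∪ c '' Set.Icc 2 k ∪ a '' Set.Icc (k+1) n :=
        Or.inr ⟨k+1, Set.mem_Icc.2 ⟨le_refl _, hkn⟩, rfl⟩
      have iB : IsoM
          (con (del M (({a 0, b 1} : Set α) ∪ c '' Set.Icc 2 k ∪ a '' Set.Icc (k+1) n)) {b (k+1)})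
          (con (del M (({a 0, b 1} : Set α) ∪ c '' Set.Icc 2 k ∪ a '' Set.Icc (k+1) n)) {b k}) := by
        refine stepB (hDc k hklt) (by simp) (by simp)
          (dbb (k+1) hkn k hkn' (by omega)) ?_
          (hbE (k+1) hkn (by omega)) (hbE k hkn' (by omega)) (nlb (k+1) hkn) (nlb k hkn')
        rintro x ⟨hxK, hx2⟩
        simp only [Set.mem_insert_iff, Set.mem_singleton_iff] at hxK hx2
        push_neg at hx2
        rcases hxK with rfl | rfl | rfl | rfl
        · exact absurd rfl hx2.2
        · exact hcE
        · exact haE1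
        · exact absurd rfl hx2.1
      have hDeq : ({a 0, b 1} : Set α) ∪ c '' Set.Icc 2 (k-1) ∪ a '' Set.Icc k n =
          insert (a k) ((({a 0, b 1} : Set α) ∪ c '' Set.Icc 2 k ∪ a '' Set.Icc (k+1) n) \ {c k}) := by
        ext x
        simp only [Set.mem_union, Set.mem_insert_iff, Set.mem_singleton_iff, Set.mem_image,
          Set.mem_Icc, Set.mem_diff]
        constructor
        · rintro (((hEq | hEq) | ⟨j, hj, hEq⟩) | ⟨j, hj, hEq⟩)
          · exact Or.inr ⟨Or.inl (Or.inl (Or.inl hEq)), by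
              subst hEq; exact dac 0 h0n k hkn'⟩
          · exact Or.inr ⟨Or.inl (Or.inl (Or.inr hEq)), by
              subst hEq; exact dbc 1 h1n k hkn'⟩
          · refine Or.inr ⟨Or.inl (Or.inr ⟨j, ⟨hj.1, by omega⟩, hEq⟩), ?_⟩
            subst hEq
            exact (dcc j (by omega) k hkn' (by omega))
          · rcases eq_or_ne j k with rfl | hjk
            · exact Or.inl hEq.symm
            · refine Or.inr ⟨Or.inr ⟨j, ⟨by omega, hj.2⟩, hEq⟩, ?_⟩
              subst hEq
              exact dac j hj.2 k hkn'
        · rintro (hEq | ⟨((hEq | hEq) | ⟨j, hj, hEq⟩) | ⟨j, hj, hEq⟩, hxc⟩)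
          · exact Or.inr ⟨k, ⟨le_refl k, hkn'⟩, hEq.symm⟩
          · exact Or.inl (Or.inl (Or.inl hEq))
          · exact Or.inl (Or.inl (Or.inr hEq))
          · refine Or.inl (Or.inr ⟨j, ⟨hj.1, ?_⟩, hEq⟩)
            rcases eq_or_ne j k with rfl | hjk
            · exact absurd hEq.symm hxc
            · omega
          · exact Or.inr ⟨j, ⟨by omega, hj.2⟩, hEq⟩
      have iA : IsoM
          (con (del M (({a 0, b 1} : Set α) ∪ c '' Set.Icc 2 k ∪ a '' Set.Icc (k+1) n)) {b k})
          (con (del M (({a 0, b 1} : Set α) ∪ c '' Set.Icc 2 (k-1) ∪ a '' Set.Icc k n)) {b k}) :=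
        stepA (hCz k hkn') (dbc k hkn' k hkn') ((dab k hkn' k hkn').symm)
          ((dac k hkn' k hkn').symm) hcE haE (hbE k hkn' (by omega)) hDeq
      exact (iB.trans iA).trans (IH hkn')
  -- glue : S3 equals the set E_n
  have eqS3 : S3 = ({a 0, b 1} : Set α) ∪ c '' Set.Icc 2 (n-1) ∪ a '' Set.Icc n n := by
    rw [hS3def, hS2def, hS1def, hS0def]
    ext x
    simp only [Set.mem_union, Set.mem_insert_iff, Set.mem_singleton_iff, Set.mem_image,
      Set.mem_Icc, Set.mem_diff, Set.mem_Iic]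
    constructor
    · rintro (hEq | ⟨(hEq | ⟨(hEq | ⟨⟨j, hj, hEq⟩, hx1⟩), hx0⟩), hxn⟩)
      · exact Or.inr ⟨n, ⟨le_refl n, le_refl n⟩, hEq.symm⟩
      · exact Or.inl (Or.inl (Or.inl hEq))
      · exact Or.inl (Or.inl (Or.inr hEq))
      · refine Or.inl (Or.inr ⟨j, ⟨?_, ?_⟩, hEq⟩) <;>
        · subst hEq
          have hj0 : j ≠ 0 := fun h => hx0 (by rw [h])
          have hj1 : j ≠ 1 := fun h => hx1 (by rw [h])
          have hjn : j ≠ n := fun h => hxn (by rw [h])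
          omega
    · rintro (((hEq | hEq) | ⟨j, hj, hEq⟩) | ⟨j, hj, hEq⟩)
      · refine Or.inr ⟨Or.inl hEq, ?_⟩
        subst hEq; exact dac 0 h0n n (le_refl n)
      · refine Or.inr ⟨Or.inr ⟨Or.inl hEq, ?_⟩, ?_⟩ <;>
        · subst hEq
          first
            | exact dbc 1 h1n 0 h0n
            | exact dbc 1 h1n n (le_refl n)
      · refine Or.inr ⟨Or.inr ⟨Or.inr ⟨⟨j, by omega, hEq⟩, ?_⟩, ?_⟩, ?_⟩ <;>
        · subst hEq
          first
            | exact dcc j (by omega) 1 h1n (by omega)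
            | exact dcc j (by omega) 0 h0n (by omega)
            | exact dcc j (by omega) n (le_refl n) (by omega)
      · have hjn : j = n := by omega
        subst hjn
        exact Or.inl hEq.symm
  have i6 : IsoM (con (del M S3) {b n})
      (con (del M (({a 0, b 1} : Set α) ∪ a '' Set.Icc 2 n)) {b 2}) := by
    rw [eqS3]
    exact key n h2n (le_refl n)
  exact ((((i1.trans i2).trans i3).trans i4).trans i5).trans i6
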